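/- Let W ⊆ (ℝmax^n)^2 be a closed congruence. Then for all f, g ∈ ℝmax^n: (f,g) ∈ W if, and only if, f̄ = ḡ. -/

import Mathlib

open scoped Classical

noncomputable section

/-- The max-plus semiring `ℝmax = ℝ ∪ {-∞}`. Its `Add` is the max-plus
"multiplication" `a ⊗ b = a + b` (with `-∞` absorbing), its `max` is the
max-plus "addition". -/
abbrev Rmax := WithBot ℝ

/-- The order topology on `WithBot ℝ` (the topology of the metric
`d(a,b) = |exp a - exp b|`). -/
instance : TopologicalSpace Rmax := Preorder.topology Rmax
instance : OrderTopology Rmax := ⟨rfl⟩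

/-- Vectors of the max-plus semimodule `ℝmax^n`. -/
abbrev RmaxVec (n : ℕ) := Fin n → Rmax

/-- The max-plus linear combination `xλ ⊕ yμ`. -/
def maxComb {n : ℕ} (x y : RmaxVec n) (lam mu : Rmax) : RmaxVec n :=
  fun i => max (x i + lam) (y i + mu)

/-- `V ⊆ ℝmax^n` is a (max-plus) subsemimodule. -/
def IsSubsemimodule {n : ℕ} (V : Set (RmaxVec n)) : Prop :=
  ∀ x ∈ V, ∀ y ∈ V, ∀ lam mu : Rmax, maxComb x y lam mu ∈ V

/-- `W ⊆ (ℝmax^n)² ≅ ℝmax^{2n}` is a (max-plus) subsemimodule,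
with the entrywise operations. -/
def IsSubsemimodulePair {n : ℕ} (W : Set (RmaxVec n × RmaxVec n)) : Prop :=
  ∀ p ∈ W, ∀ q ∈ W, ∀ lam mu : Rmax,
    (maxComb p.1 q.1 lam mu, maxComb p.2 q.2 lam mu) ∈ W

/-- A pre-congruence: a subsemimodule of `(ℝmax^n)²` containing the diagonal
and transitive. -/
def IsPrecongruence {n : ℕ} (W : Set (RmaxVec n × RmaxVec n)) : Prop :=
  IsSubsemimodulePair W ∧ (∀ f : RmaxVec n, (f, f) ∈ W) ∧
    ∀ f g h : RmaxVec n, (f, g) ∈ W → (g, h) ∈ W → (f, h) ∈ W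

/-- A polar cone: a pre-congruence such that `f ≤ g` implies `(f,g) ∈ W`. -/
def IsPolarCone {n : ℕ} (W : Set (RmaxVec n × RmaxVec n)) : Prop :=
  IsPrecongruence W ∧ ∀ f g : RmaxVec n, f ≤ g → (f, g) ∈ W

/-- A congruence: a symmetric pre-congruence. -/
def IsCongruence {n : ℕ} (W : Set (RmaxVec n × RmaxVec n)) : Prop :=
  IsPrecongruence W ∧ ∀ f g : RmaxVec n, (f, g) ∈ W → (g, f) ∈ W

/-- The max-plus bracket `⟨y, x⟩ = max_i (y_i + x_i)`. -/
def mpBracket {n : ℕ} (y x : RmaxVec n) : Rmax :=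
  Finset.univ.sup fun i => y i + x i

/-- The polar `V°` of `V ⊆ ℝmax^n`. -/
def mpPolar {n : ℕ} (V : Set (RmaxVec n)) : Set (RmaxVec n × RmaxVec n) :=
  { p | ∀ x ∈ V, mpBracket p.1 x ≤ mpBracket p.2 x }

/-- The orthogonal `V⊥` of `V ⊆ ℝmax^n`. -/
def mpOrtho {n : ℕ} (V : Set (RmaxVec n)) : Set (RmaxVec n × RmaxVec n) :=
  { p | ∀ x ∈ V, mpBracket p.1 x = mpBracket p.2 x }

/-- The dual polar `W⋄` of `W ⊆ (ℝmax^n)²`. -/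
def mpDiamond {n : ℕ} (W : Set (RmaxVec n × RmaxVec n)) : Set (RmaxVec n) :=
  { x | ∀ p ∈ W, mpBracket p.1 x ≤ mpBracket p.2 x }

/-- The dual orthogonal `W⊤` of `W ⊆ (ℝmax^n)²`. -/
def mpTop {n : ℕ} (W : Set (RmaxVec n × RmaxVec n)) : Set (RmaxVec n) :=
  { x | ∀ p ∈ W, mpBracket p.1 x = mpBracket p.2 x }

/-- The canonical embedding of `ℝmax = ℝ ∪ {-∞}` into `EReal = ℝ ∪ {±∞}`. -/
def toE : Rmax → EReal := WithBot.recBotCoe ⊥ (fun x => (x : EReal))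

/-- The entrywise supremum `ḡ ∈ EReal^n` of `{ f | (f,g) ∈ W }`,
computed in `EReal`. -/
def ebar {n : ℕ} (W : Set (RmaxVec n × RmaxVec n)) (g : RmaxVec n) :
    Fin n → EReal :=
  fun i => sSup { a : EReal | ∃ f : RmaxVec n, (f, g) ∈ W ∧ a = toE (f i) }

/-- The residuation `u∖x = sSup { λ | ∀ i, u_i + λ ≤ x_i }` in `EReal`. -/
def eres {n : ℕ} (u x : Fin n → EReal) : EReal :=
  sSup { lam : EReal | ∀ i, u i + lam ≤ x i }

/-- `z^β`: the vector in `ℝmax^n` obtained from `z ∈ EReal^n` by replacing the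
entries equal to `+∞` by `β` and keeping the other entries. -/
def cut {n : ℕ} (z : Fin n → EReal) (b : Rmax) : RmaxVec n :=
  fun i => if z i = ⊤ then b else if z i = ⊥ then ⊥ else ((z i).toReal : ℝ)


section Aux

variable {n : ℕ} {W : Set (RmaxVec n × RmaxVec n)}

lemma toE_bot : toE (⊥ : Rmax) = ⊥ := rfl

lemma toE_coe (r : ℝ) : toE ((r : ℝ) : Rmax) = (r : EReal) := rfl

lemma coe_lt_of_coe_lt_toE {s : ℝ} {x : Rmax} (h : (s : EReal) < toE x) :
    ((s : ℝ) : Rmax) < x := by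
  induction x using WithBot.recBotCoe with
  | bot => rw [toE_bot] at h; exact absurd h (not_lt_bot)
  | coe t =>
      rw [toE_coe] at h
      exact_mod_cast h

lemma maxComb_zero_zero {a b : RmaxVec n} :
    maxComb a b 0 0 = fun j => max (a j) (b j) :=
  funext fun j => by
    show max (a j + 0) (b j + 0) = max (a j) (b j)
    rw [add_zero, add_zero]

lemma ws_join (hW : IsCongruence W) {a b g : RmaxVec n}
    (ha : (a, g) ∈ W) (hb : (b, g) ∈ W) :
    ((fun j => max (a j) (b j)), g) ∈ W := by
  have h1 := hW.1.1 (a, g) ha (b, g) hb 0 0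
  rw [maxComb_zero_zero, maxComb_zero_zero] at h1
  have e : (fun j => max (g j) (g j)) = g := funext fun j => max_self _
  rw [e] at h1
  exact h1

lemma ws_interval (hW : IsCongruence W) {u v g : RmaxVec n}
    (hu : (u, g) ∈ W) (hgv : ∀ j, g j ≤ v j) (hvu : ∀ j, v j ≤ u j) :
    (v, g) ∈ W := by
  have h1 := hW.1.1 (u, g) hu (v, v) (hW.1.2.1 v) 0 0
  rw [maxComb_zero_zero, maxComb_zero_zero] at h1
  have e1 : (fun i => max (u i) (v i)) = u := funext fun i => max_eq_left (hvu i)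
  have e2 : (fun i => max (g i) (v i)) = v := funext fun i => max_eq_right (hgv i)
  rw [e1, e2] at h1
  exact hW.1.2.2 v u g (hW.2 u v h1) hu

lemma ebar_eq_of_mem (hW : IsCongruence W) {f g : RmaxVec n}
    (hfg : (f, g) ∈ W) : ebar W f = ebar W g := by
  funext i
  unfold ebar
  congr 1
  ext a
  constructor
  · rintro ⟨h, hh, rfl⟩
    exact ⟨h, hW.1.2.2 h f g hh hfg, rfl⟩
  · rintro ⟨h, hh, rfl⟩
    exact ⟨h, hW.1.2.2 h g f hh (hW.2 f g hfg), rfl⟩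

lemma key (hW : IsCongruence W) (hclosed : IsClosed W) (f g : RmaxVec n)
    (hle : ∀ i, toE (f i) ≤ ebar W g i) :
    ((fun j => max (f j) (g j)), g) ∈ W := by
  have hex : ∀ (i : Fin n) (k : ℕ), ∃ v : RmaxVec n,
      (v, g) ∈ W ∧ (∀ j, g j ≤ v j) ∧ (∀ j, v j ≤ max (f j) (g j)) ∧
      (∀ r : ℝ, f i = ((r : ℝ) : Rmax) → (((r - 1/(k+1) : ℝ)) : Rmax) < v i) := by
    intro i k
    by_cases hfi : ∃ r : ℝ, f i = ((r : ℝ) : Rmax)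
    · obtain ⟨r, hr⟩ := hfi
      have heps : (0:ℝ) < 1/(k+1) := by positivity
      have h1 : (((r - 1/(k+1) : ℝ)) : EReal) < ebar W g i := by
        refine lt_of_lt_of_le ?_ (hle i)
        rw [hr, toE_coe]
        exact_mod_cast sub_lt_self r heps
      unfold ebar at h1
      obtain ⟨a, ⟨h, hhW, rfl⟩, hlt⟩ := lt_sSup_iff.mp h1
      have hhi : (((r - 1/(k+1) : ℝ)) : Rmax) < h i := coe_lt_of_coe_lt_toE hlt
      have hu : ((fun j => max (h j) (g j)), g) ∈ W := ws_join hW hhW (hW.1.2.1 g)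
      refine ⟨fun j => max (min (h j) (max (f j) (g j))) (g j),
        ws_interval hW hu (fun j => le_max_right _ _)
          (fun j => max_le_max (min_le_left _ _) le_rfl),
        fun j => le_max_right _ _,
        fun j => max_le (min_le_right _ _) (le_max_right _ _), ?_⟩
      intro r' hr'
      have hrr : r' = r := by
        rw [hr] at hr'
        exact_mod_cast hr'.symm
      subst hrr
      refine lt_of_lt_of_le (lt_min hhi ?_) (le_max_left _ _)
      refine lt_of_lt_of_le ?_ (le_max_left _ _)
      rw [hr]
      exact_mod_cast sub_lt_self r' heps
    · exact ⟨g, hW.1.2.1 g, fun j => le_rfl, fun j => le_max_right _ _,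
        fun r hr => absurd ⟨r, hr⟩ hfi⟩
  choose vv hv1 hv2 hv3 hv4 using hex
  set w : ℕ → RmaxVec n :=
    fun k j => max ((Finset.univ.sup fun i => vv i k) j) (g j) with hwdef
  have hwW : ∀ k, (w k, g) ∈ W := by
    intro k
    have hsup := Finset.sup_induction
      (p := fun x : RmaxVec n => ((fun j => max (x j) (g j)), g) ∈ W)
      (s := Finset.univ) (f := fun i => vv i k)
      ?_ ?_ ?_
    · exact hsup
    · show ((fun j => max ((⊥ : RmaxVec n) j) (g j)), g) ∈ W
      have e : (fun j => max ((⊥ : RmaxVec n) j) (g j)) = g := by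
        funext j
        simp
      rw [e]
      exact hW.1.2.1 g
    · intro a ha b hb
      have e : (fun j => max ((a ⊔ b) j) (g j))
          = fun j => max (max (a j) (g j)) (max (b j) (g j)) := by
        funext j
        simp only [Pi.sup_apply]
        rw [max_max_max_comm, max_self]
      rw [e]
      exact ws_join hW ha hb
    · intro i _
      have e : (fun j => max (vv i k j) (g j)) = vv i k :=
        funext fun j => max_eq_left (hv2 i k j)
      rw [e]
      exact hv1 i k
  have hub : ∀ k j, w k j ≤ max (f j) (g j) := by
    intro k j
    refine max_le ?_ (le_max_right _ _)
    rw [Finset.sup_apply]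
    exact Finset.sup_le fun i _ => hv3 i k j
  have hlb : ∀ k j, g j ≤ w k j := fun k j => le_max_right _ _
  have hlow : ∀ (k : ℕ) (i : Fin n) (r : ℝ), f i = ((r:ℝ) : Rmax) →
      (((r - 1/(k+1) : ℝ)) : Rmax) < w k i := by
    intro k i r hr
    refine lt_of_lt_of_le (hv4 i k r hr) (le_trans ?_ (le_max_left _ _))
    rw [Finset.sup_apply]
    exact Finset.le_sup (f := fun a => vv a k i) (Finset.mem_univ i)
  have hT : Filter.Tendsto (fun k => (w k, g)) Filter.atTop
      (nhds ((fun j => max (f j) (g j)), g)) := by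
    refine Filter.Tendsto.prodMk_nhds ?_ tendsto_const_nhds
    rw [tendsto_pi_nhds]
    intro j
    by_cases hfj : ∃ r : ℝ, f j = ((r:ℝ) : Rmax)
    · obtain ⟨r, hr⟩ := hfj
      rw [tendsto_order]
      constructor
      · intro a ha
        rcases lt_or_ge a (g j) with hag | hag
        · exact Filter.Eventually.of_forall fun k => lt_of_lt_of_le hag (hlb k j)
        · have haf : a < f j := (lt_max_iff.mp ha).resolve_right (not_lt.mpr hag)
          rw [hr] at haf
          induction a using WithBot.recBotCoe with
          | bot =>
              refine Filter.Eventually.of_forall fun k => ?_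
              exact lt_trans (WithBot.bot_lt_coe _) (hlow k j r hr)
          | coe s =>
              have hsr : s < r := by exact_mod_cast haf
              have h0 : Filter.Tendsto (fun k : ℕ => (1:ℝ)/(k+1))
                  Filter.atTop (nhds 0) := tendsto_one_div_add_atTop_nhds_zero_nat
              filter_upwards [h0.eventually (gt_mem_nhds (by linarith : (0:ℝ) < r - s))]
                with k hk
              refine lt_of_le_of_lt ?_ (hlow k j r hr)
              exact_mod_cast (by linarith : s ≤ r - 1/(k+1))
      · intro b hb
        exact Filter.Eventually.of_forall fun k => lt_of_le_of_lt (hub k j) hb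
    · have hbot : f j = ⊥ := by
        by_contra hne
        obtain ⟨r, hr⟩ := WithBot.ne_bot_iff_exists.mp hne
        exact hfj ⟨r, hr.symm⟩
      have hwf : ∀ k, w k j = g j := fun k =>
        le_antisymm (by simpa [hbot] using hub k j) (hlb k j)
      have : max (f j) (g j) = g j := by simp [hbot]
      rw [this]
      simpa only [hwf] using (tendsto_const_nhds :
        Filter.Tendsto (fun _ : ℕ => g j) Filter.atTop (nhds (g j)))
  exact hclosed.mem_of_tendsto hT (Filter.Eventually.of_forall fun k => hwW k)

end Aux

/-- Lemma 4.8 (property (17)) of the paper: if `W ⊆ (ℝmax^n)²` is a closed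
congruence, then `(f,g) ∈ W` if, and only if, `f̄ = ḡ`. -/
theorem mem_congruence_iff_ebar_eq (n : ℕ) (W : Set (RmaxVec n × RmaxVec n))
    (hclosed : IsClosed W) (hW : IsCongruence W) (f g : RmaxVec n) :
    (f, g) ∈ W ↔ ebar W f = ebar W g := by
  constructor
  · exact fun h => ebar_eq_of_mem hW h
  · intro h
    have h1 : ∀ i, toE (f i) ≤ ebar W g i := by
      intro i
      rw [← h]
      exact le_sSup ⟨f, hW.1.2.1 f, rfl⟩
    have h2 : ∀ i, toE (g i) ≤ ebar W f i := by
      intro i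
      rw [h]
      exact le_sSup ⟨g, hW.1.2.1 g, rfl⟩
    have A := key hW hclosed f g h1
    have B := key hW hclosed g f h2
    rw [show (fun j => max (g j) (f j)) = fun j => max (f j) (g j) from
      funext fun j => max_comm _ _] at B
    exact hW.1.2.2 f (fun j => max (f j) (g j)) g (hW.2 _ _ B) A
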